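/- arXiv:1603.01527 — 2 statements merged into one kernel-verified Lean document; each statement's English description precedes it below -/
import Mathlib

section
/- Let X be a periodic stationary process with period 1 and continuous sample paths which is ergodic. Then there exists a continuous deterministic function g : ℝ → ℝ with period 1 such that X has the same law as the process t ↦ g(t + U), where U is uniformly distributed on [0,1]; equivalently, the law of X on H is the pushforward of the uniform distribution on [0,1] under the map u ↦ g(· + u). -/
open MeasureTheory Filter Set

noncomputable section

/-- The path space `H`: continuous functions `ℝ → ℝ` with period 1, carrying the
(trace of the) cylindrical σ-field. -/
abbrev PathSpace : Type := {g : ℝ → ℝ // Continuous g ∧ Function.Periodic g 1}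

/-- The shift `θ_c` acting on the path space: `(θ_c g)(x) = g (x + c)`. -/
def shiftPath (c : ℝ) (g : PathSpace) : PathSpace :=
  ⟨fun x => g.1 (x + c),
   g.2.1.comp (continuous_id.add continuous_const),
   fun x => by simpa [add_right_comm] using g.2.2 (x + c)⟩

/-- A periodic stationary process with period 1, identified with its law on the
path space: the law is invariant under every shift `θ_c`. -/
def IsStationaryProc (μ : Measure PathSpace) : Prop :=
  ∀ c : ℝ, μ.map (shiftPath c) = μ

/-- Ergodicity: every measurable set invariant under all shifts has measure 0 or 1. -/
def IsErgodicProc (μ : Measure PathSpace) : Prop :=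
  ∀ A : Set PathSpace, MeasurableSet A → (∀ c : ℝ, shiftPath c ⁻¹' A = A) →
    μ A = 0 ∨ μ A = 1

/-- An intrinsic location functional, described through the endpoints of the
compact interval `[a,b]` (with `a < b`), taking values in `ℝ ∪ {∞} = WithTop ℝ`.
The defining conditions are imposed for all paths in `H`, i.e. all continuous
1-periodic functions. -/
structure ILF where
  /-- the location `L(g,[a,b])` -/
  L : (ℝ → ℝ) → ℝ → ℝ → WithTop ℝ
  /-- measurability of `L(·,I)` on `H` (with `{∞}` a separate measurable point) -/
  measurable' : ∀ a b : ℝ, a < b → ∀ s : Set ℝ, MeasurableSet s →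
    MeasurableSet {g : PathSpace | ∃ t ∈ s, L g.1 a b = (t : WithTop ℝ)}
  /-- `L(g,I) ∈ I ∪ {∞}` -/
  mem_or_top : ∀ g : ℝ → ℝ, Continuous g → Function.Periodic g 1 →
    ∀ a b : ℝ, a < b → L g a b = ⊤ ∨ ∃ t ∈ Set.Icc a b, L g a b = (t : WithTop ℝ)
  /-- shift compatibility: `L(g,I) = L(θ_c g, I - c) + c` -/
  shift : ∀ g : ℝ → ℝ, Continuous g → Function.Periodic g 1 →
    ∀ a b c : ℝ, a < b →
      L g a b = L (fun x => g (x + c)) (a - c) (b - c) + (c : WithTop ℝ)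
  /-- stability under restrictions -/
  restrict : ∀ g : ℝ → ℝ, Continuous g → Function.Periodic g 1 →
    ∀ a b a' b' : ℝ, a < b → a' < b' → a ≤ a' → b' ≤ b →
      (∃ t ∈ Set.Icc a' b', L g a b = (t : WithTop ℝ)) → L g a' b' = L g a b
  /-- consistency of existence -/
  exist : ∀ g : ℝ → ℝ, Continuous g → Function.Periodic g 1 →
    ∀ a b a' b' : ℝ, a < b → a' < b' → a ≤ a' → b' ≤ b →
      L g a' b' ≠ ⊤ → L g a b ≠ ⊤

/-- The point of `ℝ` encoding the extra point `∞` of `[0,T] ∪ {∞}`; since all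
intervals considered are `[0,T]` with `T ≤ 1`, the point `2` is an isolated
point of `[0,T] ∪ {2}`, exactly as `∞` is in `[0,T] ∪ {∞}`. -/
def inftyPoint : ℝ := 2

/-- The embedding of `[0,T] ∪ {∞}` into `ℝ`, sending `∞` to `inftyPoint`. -/
def embedTop (x : WithTop ℝ) : ℝ := x.untopD inftyPoint

/-- The law `F^X_{L,T}` of `L(X,[0,T])`, as a measure on `ℝ`
(a probability measure supported on `[0,T] ∪ {inftyPoint}`). -/
def lawOn (Lf : ILF) (μ : Measure PathSpace) (T : ℝ) : Measure ℝ :=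
  μ.map fun g : PathSpace => embedTop (Lf.L g.1 0 T)

/-- `f` is a right-continuous density on `(0,T)` of (the restriction to `(0,T)` of)
the measure `F`; in particular this restriction is absolutely continuous. -/
def HasDensityOn (F : Measure ℝ) (f : ℝ → ℝ) (T : ℝ) : Prop :=
  (∀ t ∈ Set.Ioo 0 T, ContinuousWithinAt f (Set.Ici t) t) ∧
  ∀ s : Set ℝ, MeasurableSet s → s ⊆ Set.Ioo 0 T →
    F s = ∫⁻ t in s, ENNReal.ofReal (f t)

/-- The total variation of `f` on `(t₁,t₂)` is at most `M`: the sum over any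
finite increasing sequence of points of `(t₁,t₂)` is at most `M`. -/
def TVBound (f : ℝ → ℝ) (t₁ t₂ M : ℝ) : Prop :=
  ∀ (n : ℕ) (s : ℕ → ℝ), (∀ i ≤ n, s i ∈ Set.Ioo t₁ t₂) →
    (∀ i < n, s i < s (i + 1)) →
    ∑ i ∈ Finset.range n, |f (s (i + 1)) - f (s i)| ≤ M

/-- Condition (TV): for all `0 < t₁ < t₂ < T`, the total variation of `f` on
`(t₁,t₂)` is at most `f t₁ + f t₂`. -/
def CondTV (f : ℝ → ℝ) (T : ℝ) : Prop :=
  ∀ t₁ t₂ : ℝ, 0 < t₁ → t₁ < t₂ → t₂ < T → TVBound f t₁ t₂ (f t₁ + f t₂)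

namespace Stmt0Aux

open scoped ENNReal

lemma shift_shift (c u : ℝ) (g : PathSpace) :
    shiftPath u (shiftPath c g) = shiftPath (u + c) g := by
  apply Subtype.ext
  funext x
  show g.1 (x + u + c) = g.1 (x + (u + c))
  rw [add_assoc]

lemma shift_one (u : ℝ) (g : PathSpace) : shiftPath (u + 1) g = shiftPath u g := by
  apply Subtype.ext
  funext x
  show g.1 (x + (u + 1)) = g.1 (x + u)
  rw [← add_assoc]
  exact g.2.2 (x + u)

lemma measurable_shiftPath (c : ℝ) : Measurable (shiftPath c) := by
  refine Measurable.subtype_mk ?_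
  exact measurable_pi_lambda _ fun x =>
    (measurable_pi_apply (x + c)).comp measurable_subtype_coe

lemma tendsto_ceil_div (t : ℝ) :
    Filter.Tendsto (fun n : ℕ => (⌈t * ((n : ℝ) + 1)⌉ : ℝ) / ((n : ℝ) + 1)) atTop (nhds t) := by
  have h1 : Filter.Tendsto (fun n : ℕ => t + 1 / ((n : ℝ) + 1)) atTop (nhds t) := by
    have h0 : Filter.Tendsto (fun n : ℕ => 1 / ((n : ℝ) + 1)) atTop (nhds 0) :=
      tendsto_one_div_add_atTop_nhds_zero_nat
    simpa using tendsto_const_nhds.add h0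
  refine tendsto_of_tendsto_of_tendsto_of_le_of_le (tendsto_const_nhds) h1 ?_ ?_
  · intro n
    have hn : (0:ℝ) < (n : ℝ) + 1 := by positivity
    rw [le_div_iff₀ hn]
    exact Int.le_ceil _
  · intro n
    have hn : (0:ℝ) < (n : ℝ) + 1 := by positivity
    rw [div_le_iff₀ hn]
    have h2 := (Int.ceil_lt_add_one (t * ((n : ℝ) + 1))).le
    calc (⌈t * ((n : ℝ) + 1)⌉ : ℝ) ≤ t * ((n : ℝ) + 1) + 1 := h2
      _ = (t + 1 / ((n : ℝ) + 1)) * ((n : ℝ) + 1) := by field_simp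

lemma measurable_eval_countable {c : ℝ → ℝ} (hc : Measurable c)
    (hcnt : (Set.range c).Countable) :
    Measurable fun p : ℝ × PathSpace => p.2.1 (c p.1) := by
  intro B hB
  have heq : (fun p : ℝ × PathSpace => p.2.1 (c p.1)) ⁻¹' B =
      ⋃ v ∈ Set.range c, (c ⁻¹' {v}) ×ˢ {g : PathSpace | g.1 v ∈ B} := by
    ext ⟨u, g⟩
    simp only [Set.mem_preimage, Set.mem_iUnion, Set.mem_prod,
      Set.mem_singleton_iff, Set.mem_setOf_eq, Set.mem_range, exists_prop]
    constructor
    · intro h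
      exact ⟨c u, ⟨u, rfl⟩, rfl, h⟩
    · rintro ⟨v, -, rfl, h⟩
      exact h
  rw [heq]
  exact MeasurableSet.biUnion hcnt fun v _ =>
    (hc (measurableSet_singleton v)).prod
      (((measurable_pi_apply v).comp measurable_subtype_coe) hB)

lemma measurable_eval : Measurable fun p : ℝ × PathSpace => p.2.1 p.1 := by
  have key : ∀ n : ℕ, Measurable fun p : ℝ × PathSpace =>
      p.2.1 ((⌈p.1 * ((n : ℝ) + 1)⌉ : ℝ) / ((n : ℝ) + 1)) := by
    intro n
    apply measurable_eval_countable
      (c := fun u : ℝ => (⌈u * ((n : ℝ) + 1)⌉ : ℝ) / ((n : ℝ) + 1))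
    · have h1 : Measurable fun u : ℝ => u * ((n : ℝ) + 1) := measurable_id.mul_const _
      have h2 : Measurable fun u : ℝ => ⌈u * ((n : ℝ) + 1)⌉ := Int.measurable_ceil.comp h1
      have h3 : Measurable fun k : ℤ => (k : ℝ) / ((n : ℝ) + 1) := measurable_from_top
      exact h3.comp h2
    · refine Set.Countable.mono ?_ (Set.countable_range fun k : ℤ => (k : ℝ) / ((n : ℝ) + 1))
      rintro x ⟨u, rfl⟩
      exact ⟨⌈u * ((n : ℝ) + 1)⌉, rfl⟩
  apply measurable_of_tendsto_metrizable key
  rw [tendsto_pi_nhds]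
  intro p
  exact (p.2.2.1.tendsto p.1).comp (tendsto_ceil_div p.1)

lemma measurable_phi : Measurable fun p : ℝ × PathSpace => shiftPath p.1 p.2 := by
  refine Measurable.subtype_mk (measurable_pi_lambda _ fun x => ?_)
  exact measurable_eval.comp ((measurable_fst.const_add x).prodMk measurable_snd)

lemma lintegral_shift_periodic (h : ℝ → ℝ≥0∞) (hp : ∀ u, h (u + 1) = h u) (c : ℝ) :
    ∫⁻ u in Set.Ioc (0:ℝ) 1, h (u + c) = ∫⁻ u in Set.Ioc (0:ℝ) 1, h u := by
  haveI : Fact ((0:ℝ) < 1) := ⟨one_pos⟩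
  have hper : Function.Periodic h 1 := hp
  have key : ∀ t : ℝ, ∫⁻ u in Set.Ioc t (t + 1), h u = ∫⁻ b : AddCircle (1:ℝ), hper.lift b := by
    intro t
    rw [← AddCircle.lintegral_preimage (1:ℝ) t hper.lift]
    exact lintegral_congr fun u => (hper.lift_coe u).symm
  have hpre : (fun u : ℝ => u + c) ⁻¹' Set.Ioc c (c + 1) = Set.Ioc 0 1 := by
    ext u
    simp only [Set.mem_preimage, Set.mem_Ioc]
    constructor <;> intro hu <;> exact ⟨by linarith [hu.1], by linarith [hu.2]⟩
  have htrans := (measurePreserving_add_right volume c).setLIntegral_comp_preimage_emb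
    (measurableEmbedding_addRight c) h (Set.Ioc c (c + 1))
  rw [hpre] at htrans
  rw [htrans, key c, ← key 0, zero_add]

/-- The orbit measure of a path. -/
def nuM (g : PathSpace) : Measure PathSpace :=
  (volume.restrict (Set.Ioc (0:ℝ) 1)).map fun u => shiftPath u g

lemma measurable_shift_of (g : PathSpace) : Measurable fun u : ℝ => shiftPath u g :=
  measurable_phi.comp (measurable_id.prodMk measurable_const)

lemma nuM_apply (g : PathSpace) {A : Set PathSpace} (hA : MeasurableSet A) :
    nuM g A = (volume.restrict (Set.Ioc (0:ℝ) 1)) ((fun u => shiftPath u g) ⁻¹' A) :=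
  Measure.map_apply (measurable_shift_of g) hA

/-- The fraction of time the orbit of `g` spends in `A`. -/
def FF (A : Set PathSpace) (g : PathSpace) : ℝ≥0∞ :=
  ∫⁻ u in Set.Ioc (0:ℝ) 1, A.indicator 1 (shiftPath u g)

lemma indicator_comp {α β : Type*} (f : α → β) (A : Set β) (x : α) :
    A.indicator (1 : β → ℝ≥0∞) (f x) = (f ⁻¹' A).indicator (1 : α → ℝ≥0∞) x := by
  by_cases h : f x ∈ A
  · rw [Set.indicator_of_mem h, Set.indicator_of_mem (Set.mem_preimage.mpr h)]
    rfl
  · rw [Set.indicator_of_notMem h,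
      Set.indicator_of_notMem (fun hx => h (Set.mem_preimage.mp hx))]

lemma FF_eq (A : Set PathSpace) (hA : MeasurableSet A) (g : PathSpace) :
    FF A g = nuM g A := by
  rw [nuM_apply g hA, ← lintegral_indicator_one ((measurable_shift_of g) hA)]
  exact lintegral_congr fun u => indicator_comp (fun u => shiftPath u g) A u

lemma measurable_FF {A : Set PathSpace} (hA : MeasurableSet A) : Measurable (FF A) := by
  have h : Measurable fun p : ℝ × PathSpace => A.indicator (1 : PathSpace → ℝ≥0∞) (shiftPath p.1 p.2) :=
    (measurable_one.indicator hA).comp measurable_phi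
  exact h.lintegral_prod_left'

lemma FF_shift (A : Set PathSpace) (c : ℝ) (g : PathSpace) :
    FF A (shiftPath c g) = FF A g := by
  have hp : ∀ u : ℝ, A.indicator (1 : PathSpace → ℝ≥0∞) (shiftPath (u + 1) g)
      = A.indicator (1 : PathSpace → ℝ≥0∞) (shiftPath u g) := fun u => by rw [shift_one]
  calc FF A (shiftPath c g)
      = ∫⁻ u in Set.Ioc (0:ℝ) 1,
          (fun v => A.indicator (1 : PathSpace → ℝ≥0∞) (shiftPath v g)) (u + c) := by
        refine lintegral_congr fun u => ?_
        simp only [FF]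
        rw [shift_shift]
    _ = FF A g := lintegral_shift_periodic (fun v => A.indicator (1 : PathSpace → ℝ≥0∞) (shiftPath v g)) hp c

lemma lintegral_indicator_shift (μ : Measure PathSpace) (hstat : IsStationaryProc μ)
    {A : Set PathSpace} (hA : MeasurableSet A) (u : ℝ) :
    ∫⁻ g, A.indicator (1 : PathSpace → ℝ≥0∞) (shiftPath u g) ∂μ = μ A := by
  calc ∫⁻ g, A.indicator (1 : PathSpace → ℝ≥0∞) (shiftPath u g) ∂μ
      = ∫⁻ g, ((shiftPath u) ⁻¹' A).indicator (1 : PathSpace → ℝ≥0∞) g ∂μ :=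
        lintegral_congr fun g => indicator_comp _ A g
    _ = μ (shiftPath u ⁻¹' A) := lintegral_indicator_one ((measurable_shiftPath u) hA)
    _ = μ.map (shiftPath u) A := (Measure.map_apply (measurable_shiftPath u) hA).symm
    _ = μ A := by rw [hstat u]

lemma lintegral_FF (μ : Measure PathSpace) [IsProbabilityMeasure μ] (hstat : IsStationaryProc μ)
    {A : Set PathSpace} (hA : MeasurableSet A) :
    ∫⁻ g, FF A g ∂μ = μ A := by
  have hmeas : Measurable fun p : ℝ × PathSpace =>
      A.indicator (1 : PathSpace → ℝ≥0∞) (shiftPath p.1 p.2) :=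
    (measurable_one.indicator hA).comp measurable_phi
  have hswap := lintegral_lintegral_swap (μ := volume.restrict (Set.Ioc (0:ℝ) 1)) (ν := μ)
      (f := fun u g => A.indicator (1 : PathSpace → ℝ≥0∞) (shiftPath u g)) hmeas.aemeasurable
  calc ∫⁻ g, FF A g ∂μ
      = ∫⁻ u in Set.Ioc (0:ℝ) 1,
          ∫⁻ g, A.indicator (1 : PathSpace → ℝ≥0∞) (shiftPath u g) ∂μ := hswap.symm
    _ = ∫⁻ _ in Set.Ioc (0:ℝ) 1, μ A :=
        lintegral_congr fun u => lintegral_indicator_shift μ hstat hA u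
    _ = μ A := by simp [Real.volume_Ioc]

lemma ae_const_of_invariant (μ : Measure PathSpace) [IsProbabilityMeasure μ]
    (herg : IsErgodicProc μ) (f : PathSpace → ℝ≥0∞) (hf : Measurable f)
    (hinv : ∀ c g, f (shiftPath c g) = f g) :
    ∃ κ : ℝ≥0∞, f =ᵐ[μ] fun _ => κ := by
  have hdich : ∀ r : ℝ≥0∞, μ {g | f g ≤ r} = 0 ∨ μ {g | f g ≤ r} = 1 := by
    intro r
    refine herg _ (hf measurableSet_Iic) fun c => ?_
    ext g
    simp only [Set.mem_preimage, Set.mem_setOf_eq, hinv c g]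
  set T : Set ℝ≥0∞ := {r | μ {g | f g ≤ r} = 1} with hT
  have hTne : T.Nonempty := ⟨⊤, by simp [hT, le_top]⟩
  obtain ⟨u, -, hu_tendsto, hu_mem⟩ := exists_seq_tendsto_sInf hTne (OrderBot.bddBelow T)
  have h_le : ∀ᵐ g ∂μ, f g ≤ sInf T := by
    have hall : ∀ᵐ g ∂μ, ∀ n, f g ≤ u n := by
      rw [ae_all_iff]
      intro n
      rw [ae_iff]
      have hms : MeasurableSet {g : PathSpace | f g ≤ u n} := hf measurableSet_Iic
      have hcompl : {g | ¬ f g ≤ u n} = {g | f g ≤ u n}ᶜ := rfl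
      rw [hcompl, measure_compl hms (measure_ne_top μ _), hu_mem n]
      simp
    filter_upwards [hall] with g hg
    exact ge_of_tendsto' hu_tendsto hg
  have h_ge : ∀ᵐ g ∂μ, ¬ f g < sInf T := by
    have hq : ∀ᵐ g ∂μ, ∀ q : ℚ,
        ((Real.toNNReal q : ℝ≥0∞) < sInf T) → ¬ f g ≤ (Real.toNNReal q : ℝ≥0∞) := by
      rw [ae_all_iff]
      intro q
      by_cases hqκ : (Real.toNNReal q : ℝ≥0∞) < sInf T
      · have h0 : μ {g | f g ≤ (Real.toNNReal q : ℝ≥0∞)} = 0 := by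
          rcases hdich ((Real.toNNReal q : ℝ≥0∞)) with h | h
          · exact h
          · exact absurd (csInf_le (OrderBot.bddBelow T) h) (not_le.mpr hqκ)
        have hae : ∀ᵐ g ∂μ, ¬ f g ≤ (Real.toNNReal q : ℝ≥0∞) := by
          rw [ae_iff]
          simpa only [not_not] using h0
        filter_upwards [hae] with g hg _
        exact hg
      · filter_upwards with g hc
        exact absurd hc hqκ
    filter_upwards [hq] with g hg
    intro hlt
    obtain ⟨q, _, hq1, hq2⟩ := ENNReal.lt_iff_exists_rat_btwn.mp hlt
    exact hg q hq2 hq1.le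
  refine ⟨sInf T, ?_⟩
  filter_upwards [h_le, h_ge] with g h1 h2
  exact le_antisymm h1 (not_lt.mp h2)

lemma ae_nuM (μ : Measure PathSpace) [IsProbabilityMeasure μ] (hstat : IsStationaryProc μ)
    (herg : IsErgodicProc μ) {A : Set PathSpace} (hA : MeasurableSet A) :
    ∀ᵐ g ∂μ, nuM g A = μ A := by
  obtain ⟨κ, hκ⟩ := ae_const_of_invariant μ herg (FF A) (measurable_FF hA)
    (fun c g => FF_shift A c g)
  have hκval : κ = μ A := by
    have h1 : ∫⁻ g, FF A g ∂μ = κ := by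
      rw [lintegral_congr_ae hκ]
      simp
    rw [← lintegral_FF μ hstat hA, h1]
  filter_upwards [hκ] with g hg
  rw [← FF_eq A hA g, hg, hκval]

/-- A countable generating π-system for the path space. -/
def CC : Set (Set PathSpace) :=
  Set.range fun l : List (ℚ × ℚ) => {h : PathSpace | ∀ p ∈ l, h.1 (p.1 : ℝ) < (p.2 : ℝ)}

lemma countable_CC : CC.Countable := Set.countable_range _

lemma isPiSystem_CC : IsPiSystem CC := by
  rintro s ⟨l1, rfl⟩ t ⟨l2, rfl⟩ -
  refine ⟨l1 ++ l2, ?_⟩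
  ext h
  simp only [Set.mem_setOf_eq, Set.mem_inter_iff, List.mem_append]
  constructor
  · intro hh
    exact ⟨fun p hp => hh p (Or.inl hp), fun p hp => hh p (Or.inr hp)⟩
  · rintro ⟨h1, h2⟩ p (hp | hp)
    exacts [h1 p hp, h2 p hp]

lemma measurableSet_of_mem_CC {A : Set PathSpace} (hA : A ∈ CC) : MeasurableSet A := by
  obtain ⟨l, rfl⟩ := hA
  show MeasurableSet {h : PathSpace | ∀ p ∈ l, h.1 (p.1:ℝ) < (p.2:ℝ)}
  have heq : {h : PathSpace | ∀ p ∈ l, h.1 (p.1:ℝ) < (p.2:ℝ)} =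
      ⋂ p ∈ {p : ℚ × ℚ | p ∈ l}, {h : PathSpace | h.1 (p.1:ℝ) < (p.2:ℝ)} := by
    ext h
    simp
  rw [heq]
  refine MeasurableSet.biInter l.finite_toSet.countable fun p _ => ?_
  have hm : Measurable fun h : PathSpace => h.1 (p.1 : ℝ) :=
    (measurable_pi_apply _).comp measurable_subtype_coe
  exact measurableSet_lt hm measurable_const

lemma eval_rat_measurable_gen (q : ℚ) :
    @Measurable PathSpace ℝ (MeasurableSpace.generateFrom CC) _
      fun h : PathSpace => h.1 (q : ℝ) := by
  have h2 : (Real.measurableSpace : MeasurableSpace ℝ)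
      = MeasurableSpace.generateFrom (Set.range (Set.Iio : ℝ → Set ℝ)) :=
    borel_eq_generateFrom_Iio ℝ
  rw [measurable_iff_comap_le, h2, MeasurableSpace.comap_generateFrom]
  apply MeasurableSpace.generateFrom_le
  rintro s ⟨s', ⟨a, rfl⟩, rfl⟩
  have heq : (fun h : PathSpace => h.1 (q:ℝ)) ⁻¹' Set.Iio a =
      ⋃ (r : ℚ) (_ : (r:ℝ) < a), {h : PathSpace | h.1 (q:ℝ) < (r:ℝ)} := by
    ext h
    simp only [Set.mem_preimage, Set.mem_Iio, Set.mem_iUnion, Set.mem_setOf_eq, exists_prop]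
    constructor
    · intro hh
      obtain ⟨r, hr1, hr2⟩ := exists_rat_btwn hh
      exact ⟨r, hr2, hr1⟩
    · rintro ⟨r, hr1, hr2⟩
      exact hr2.trans hr1
  show MeasurableSet[MeasurableSpace.generateFrom CC]
    ((fun h : PathSpace => h.1 (q:ℝ)) ⁻¹' Set.Iio a)
  rw [heq]
  exact MeasurableSet.iUnion fun r => MeasurableSet.iUnion fun _ =>
    MeasurableSpace.measurableSet_generateFrom ⟨[(q, r)], by ext h; simp⟩

lemma eval_measurable_gen (t : ℝ) :
    @Measurable PathSpace ℝ (MeasurableSpace.generateFrom CC) _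
      fun h : PathSpace => h.1 t := by
  have key : ∀ n : ℕ, @Measurable PathSpace ℝ (MeasurableSpace.generateFrom CC) _
      fun h : PathSpace =>
      h.1 ((⌈t * ((n : ℝ) + 1)⌉ : ℝ) / ((n : ℝ) + 1)) := by
    intro n
    have hc : ((((⌈t * ((n : ℝ) + 1)⌉ : ℤ) : ℚ) / ((n : ℚ) + 1) : ℚ) : ℝ)
        = (⌈t * ((n : ℝ) + 1)⌉ : ℝ) / ((n : ℝ) + 1) := by
      push_cast
      ring
    rw [← hc]
    exact eval_rat_measurable_gen _
  refine @measurable_of_tendsto_metrizable PathSpace ℝ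
    (MeasurableSpace.generateFrom CC) _ _ _ _ _ _ key ?_
  rw [tendsto_pi_nhds]
  intro h
  exact (h.2.1.tendsto t).comp (tendsto_ceil_div t)

lemma gen_eq : (inferInstance : MeasurableSpace PathSpace) = MeasurableSpace.generateFrom CC := by
  apply le_antisymm
  · have hle : MeasurableSpace.comap (Subtype.val : PathSpace → (ℝ → ℝ))
        MeasurableSpace.pi ≤ MeasurableSpace.generateFrom CC := by
      rw [MeasurableSpace.pi, MeasurableSpace.comap_iSup, iSup_le_iff]
      intro t
      rw [MeasurableSpace.comap_comp]
      exact measurable_iff_comap_le.mp (eval_measurable_gen t)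
    exact hle
  · exact MeasurableSpace.generateFrom_le fun A hA => measurableSet_of_mem_CC hA

end Stmt0Aux

/-- A continuous periodic ergodic process with period 1 is
(in law) a uniformly random shift of a fixed deterministic continuous
1-periodic function: its law is the pushforward of the uniform distribution on
`[0,1]` under `u ↦ g(· + u)`. -/
theorem stmt0 (μ : Measure PathSpace) [IsProbabilityMeasure μ]
    (hstat : IsStationaryProc μ) (herg : IsErgodicProc μ) :
    ∃ (g : ℝ → ℝ) (hc : Continuous g) (hp : Function.Periodic g 1),
      μ = (volume.restrict (Set.Icc (0 : ℝ) 1)).map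
        (fun u => shiftPath u ⟨g, hc, hp⟩) := by
  classical
  have key : ∀ᵐ g ∂μ, ∀ A ∈ Stmt0Aux.CC, Stmt0Aux.nuM g A = μ A := by
    rw [ae_ball_iff Stmt0Aux.countable_CC]
    intro A hA
    exact Stmt0Aux.ae_nuM μ hstat herg (Stmt0Aux.measurableSet_of_mem_CC hA)
  haveI hne : (ae μ).NeBot := ae_neBot.mpr (IsProbabilityMeasure.ne_zero μ)
  obtain ⟨g₀, hg₀⟩ := key.exists
  refine ⟨g₀.1, g₀.2.1, g₀.2.2, ?_⟩
  have hsub : (⟨g₀.1, g₀.2.1, g₀.2.2⟩ : PathSpace) = g₀ := rfl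
  rw [hsub]
  have hmain : μ = Stmt0Aux.nuM g₀ := by
    refine ext_of_generate_finite Stmt0Aux.CC Stmt0Aux.gen_eq Stmt0Aux.isPiSystem_CC
      (fun s hs => (hg₀ s hs).symm) ?_
    have huniv : Stmt0Aux.nuM g₀ Set.univ = 1 := by
      rw [Stmt0Aux.nuM_apply g₀ MeasurableSet.univ]
      simp [Real.volume_Ioc]
    rw [huniv, measure_univ]
  rw [hmain]
  show Stmt0Aux.nuM g₀ = (volume.restrict (Set.Icc (0 : ℝ) 1)).map fun u => shiftPath u g₀
  rw [show volume.restrict (Set.Icc (0:ℝ) 1) = volume.restrict (Set.Ioc (0:ℝ) 1) from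
    (Measure.restrict_congr_set Ioc_ae_eq_Icc).symm]
  rfl

end
end

section
/- Let X be a periodic stationary process with period 1 and continuous sample paths, L a first-time intrinsic location functional, and T ∈ (0,1]. Then the restriction of the law of L(X,[0,T]) to (0,T) is absolutely continuous and admits a density which is non-increasing on (0,T). -/
open MeasureTheory Filter Set
open scoped ENNReal Topology

noncomputable section

/-- Data of a candidate partially ordered random set representation:
a shift-covariant random set `S(g) ⊆ ℝ` together with a partial order on it. -/
structure PORep where
  /-- the random (path-determined) set `S(g)` -/
  S : (ℝ → ℝ) → Set ℝ
  /-- the partial order `⪯_g` on `S(g)`: `ord g t₁ t₂` means `t₁ ⪯_g t₂` -/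
  ord : (ℝ → ℝ) → ℝ → ℝ → Prop

/-- `(S,⪯)` is a partially ordered random set representation of `L`. -/
def PORep.IsRepOf (R : PORep) (Lf : ILF) : Prop :=
  -- shift covariance of the set: `S(g) = S(θ_c g) + c`
  (∀ g : ℝ → ℝ, Continuous g → Function.Periodic g 1 → ∀ c : ℝ,
    R.S g = (fun x => x + c) '' R.S (fun x => g (x + c))) ∧
  -- shift compatibility of the order
  (∀ g : ℝ → ℝ, Continuous g → Function.Periodic g 1 → ∀ c t₁ t₂ : ℝ,
    t₁ ∈ R.S g → t₂ ∈ R.S g → R.ord g t₁ t₂ →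
      R.ord (fun x => g (x + c)) (t₁ - c) (t₂ - c)) ∧
  -- `⪯_g` is a partial order on `S(g)`
  (∀ g : ℝ → ℝ, Continuous g → Function.Periodic g 1 →
    (∀ t ∈ R.S g, R.ord g t t) ∧
    (∀ t₁ ∈ R.S g, ∀ t₂ ∈ R.S g, R.ord g t₁ t₂ → R.ord g t₂ t₁ → t₁ = t₂) ∧
    (∀ t₁ ∈ R.S g, ∀ t₂ ∈ R.S g, ∀ t₃ ∈ R.S g,
      R.ord g t₁ t₂ → R.ord g t₂ t₃ → R.ord g t₁ t₃)) ∧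
  -- representation: `L(g,I) = ∞` iff `S(g) ∩ I = ∅`, otherwise `L(g,I)` is the
  -- unique maximal element of `S(g) ∩ I` for `⪯_g`
  (∀ g : ℝ → ℝ, Continuous g → Function.Periodic g 1 → ∀ a b : ℝ, a < b →
    (R.S g ∩ Set.Icc a b = ∅ → Lf.L g a b = ⊤) ∧
    ((R.S g ∩ Set.Icc a b).Nonempty →
      ∃ t ∈ R.S g ∩ Set.Icc a b, Lf.L g a b = (t : WithTop ℝ) ∧
        ∀ s ∈ R.S g ∩ Set.Icc a b, R.ord g s t))

/-- A first-time intrinsic location functional: it admits a partially ordered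
random set representation in which earlier points always dominate later ones. -/
def ILF.FirstTime (Lf : ILF) : Prop :=
  ∃ R : PORep, R.IsRepOf Lf ∧
    ∀ g : ℝ → ℝ, Continuous g → Function.Periodic g 1 →
      ∀ t₁ ∈ R.S g, ∀ t₂ ∈ R.S g, t₁ ≤ t₂ → R.ord g t₂ t₁


/-! ### Auxiliary lemmas -/

lemma measurable_shiftPath (c : ℝ) : Measurable (shiftPath c) := by
  apply Measurable.subtype_mk
  rw [measurable_pi_iff]
  intro x
  exact (measurable_pi_apply (x + c)).comp measurable_subtype_coe

lemma measurable_embedTopL (Lf : ILF) {a b : ℝ} (hab : a < b) :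
    Measurable fun g : PathSpace => embedTop (Lf.L g.1 a b) := by
  intro s hs
  classical
  have htop : MeasurableSet {g : PathSpace | Lf.L g.1 a b = ⊤} := by
    have : {g : PathSpace | Lf.L g.1 a b = ⊤}
        = {g : PathSpace | ∃ t ∈ (Set.univ : Set ℝ), Lf.L g.1 a b = (t : WithTop ℝ)}ᶜ := by
      ext g
      simp only [Set.mem_setOf_eq, Set.mem_compl_iff, Set.mem_univ, true_and]
      constructor
      · rintro h ⟨t, ht⟩; rw [h] at ht; exact (WithTop.top_ne_coe) ht
      · intro h
        cases hL : Lf.L g.1 a b with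
        | top => rfl
        | coe t => exact absurd ⟨t, hL⟩ h
    rw [this]
    exact (Lf.measurable' a b hab Set.univ MeasurableSet.univ).compl
  have hA : MeasurableSet {g : PathSpace | ∃ t ∈ s, Lf.L g.1 a b = (t : WithTop ℝ)} :=
    Lf.measurable' a b hab s hs
  have : (fun g : PathSpace => embedTop (Lf.L g.1 a b)) ⁻¹' s
      = {g : PathSpace | ∃ t ∈ s, Lf.L g.1 a b = (t : WithTop ℝ)}
        ∪ (if (2:ℝ) ∈ s then {g : PathSpace | Lf.L g.1 a b = ⊤} else ∅) := by
    ext g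
    by_cases h2 : (2:ℝ) ∈ s <;>
    · simp only [Set.mem_preimage, Set.mem_union, Set.mem_setOf_eq, h2, if_pos, if_neg,
        Set.mem_empty_iff_false, or_false, if_true]
      cases hL : Lf.L g.1 a b with
      | top =>
        simp [embedTop, hL, inftyPoint, h2]
      | coe t =>
        simp only [embedTop, hL, WithTop.untopD_coe]
        constructor
        · intro ht
          exact Or.inl ⟨t, ht, rfl⟩
        · rintro (⟨u, hu, hut⟩ | htop)
          · obtain rfl : t = u := by exact_mod_cast hut
            exact hu
          · exact absurd htop (by simp)
    
  rw [this]
  split_ifs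
  · exact hA.union htop
  · simpa using hA


section Det

variable {Lf : ILF} {R : PORep} (hrep : R.IsRepOf Lf)
  (hfirst : ∀ g : ℝ → ℝ, Continuous g → Function.Periodic g 1 →
      ∀ t₁ ∈ R.S g, ∀ t₂ ∈ R.S g, t₁ ≤ t₂ → R.ord g t₂ t₁)

include hrep hfirst

/-- For a first-time functional, `L g a b = s` means `s` is the minimum of `S g ∩ [a,b]`. -/
lemma eq_coe_iff_min (g : PathSpace) {a b : ℝ} (hab : a < b) (s : ℝ) :
    Lf.L g.1 a b = (s : WithTop ℝ) ↔
      s ∈ R.S g.1 ∩ Set.Icc a b ∧ ∀ u ∈ R.S g.1 ∩ Set.Icc a b, s ≤ u := by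
  obtain ⟨hcov, hordshift, hpo, hrepr⟩ := hrep
  obtain ⟨hemp, hne⟩ := hrepr g.1 g.2.1 g.2.2 a b hab
  obtain ⟨hrefl, hantisymm, htrans⟩ := hpo g.1 g.2.1 g.2.2
  constructor
  · intro hL
    rcases Set.eq_empty_or_nonempty (R.S g.1 ∩ Set.Icc a b) with he | hn
    · rw [hemp he] at hL; exact absurd hL (by simp)
    obtain ⟨t, ht, hLt, hmax⟩ := hne hn
    obtain rfl : t = s := by rw [hLt] at hL; exact_mod_cast hL
    refine ⟨ht, fun u hu => ?_⟩
    by_contra hlt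
    push_neg at hlt
    have h1 : R.ord g.1 t u := hfirst g.1 g.2.1 g.2.2 u hu.1 t ht.1 hlt.le
    have h2 : R.ord g.1 u t := hmax u hu
    exact absurd (hantisymm u hu.1 t ht.1 h2 h1) hlt.ne
  · rintro ⟨hs, hmin⟩
    obtain ⟨t, ht, hLt, hmax⟩ := hne ⟨s, hs⟩
    have hst : s ≤ t := hmin t ht
    have h1 : R.ord g.1 t s := hfirst g.1 g.2.1 g.2.2 s hs.1 t ht.1 hst
    have h2 : R.ord g.1 s t := hmax s hs
    obtain rfl : s = t := hantisymm s hs.1 t ht.1 h2 h1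
    exact hLt

/-- Shifting an interval to the left (keeping the target point) preserves the value. -/
lemma L_zero_of_L_shift {T : ℝ} (hT0 : 0 < T) (g : PathSpace) {c s : ℝ} (hc : 0 ≤ c)
    (hs0 : 0 ≤ s) (hsT : s ≤ T - c) (hL : Lf.L g.1 (-c) (T - c) = (s : WithTop ℝ)) :
    Lf.L g.1 0 T = (s : WithTop ℝ) := by
  have hab : -c < T - c := by linarith
  obtain ⟨⟨hsS, _⟩, hmin⟩ := (eq_coe_iff_min hrep hfirst g hab s).1 hL
  refine (eq_coe_iff_min hrep hfirst g hT0 s).2 ⟨⟨hsS, hs0, by linarith⟩, ?_⟩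
  intro u hu
  by_contra hlt
  push_neg at hlt
  have hu' : u ∈ R.S g.1 ∩ Set.Icc (-c) (T - c) :=
    ⟨hu.1, by linarith [hu.2.1], by linarith⟩
  exact absurd (hmin u hu') (by linarith)

end Det


section Key

variable {μ : Measure PathSpace} [IsProbabilityMeasure μ] (hstat : IsStationaryProc μ)
  {Lf : ILF} {R : PORep} (hrep : R.IsRepOf Lf)
  (hfirst : ∀ g : ℝ → ℝ, Continuous g → Function.Periodic g 1 →
      ∀ t₁ ∈ R.S g, ∀ t₂ ∈ R.S g, t₁ ≤ t₂ → R.ord g t₂ t₁)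
  {T : ℝ} (hT0 : 0 < T) (hT1 : T ≤ 1)

include hstat hrep hfirst hT0

lemma key_shift_le (c : ℝ) (hc : 0 ≤ c) (s : Set ℝ) (hs : MeasurableSet s)
    (hsub : s ⊆ Set.Icc 0 (T - c)) :
    μ {g : PathSpace | ∃ t ∈ s, Lf.L g.1 0 T = ((t + c : ℝ) : WithTop ℝ)}
      ≤ μ {g : PathSpace | ∃ t ∈ s, Lf.L g.1 0 T = (t : WithTop ℝ)} := by
  set A' := {g : PathSpace | ∃ t ∈ s, Lf.L g.1 0 T = ((t + c : ℝ) : WithTop ℝ)} with hA'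
  have hA'eq : A' = {g : PathSpace | ∃ t' ∈ (fun x => x - c) ⁻¹' s,
      Lf.L g.1 0 T = (t' : WithTop ℝ)} := by
    ext g
    constructor
    · rintro ⟨t, hts, hL⟩
      exact ⟨t + c, by simpa using hts, hL⟩
    · rintro ⟨t', ht's, hL⟩
      exact ⟨t' - c, ht's, by rw [sub_add_cancel]; exact hL⟩
  have hA'meas : MeasurableSet A' := by
    rw [hA'eq]
    exact Lf.measurable' 0 T hT0 _ (hs.preimage (measurable_id.sub_const c))
  have hmap : μ A' = μ (shiftPath (-c) ⁻¹' A') := by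
    conv_lhs => rw [← hstat (-c)]
    rw [Measure.map_apply (measurable_shiftPath _) hA'meas]
  have hpre : shiftPath (-c) ⁻¹' A'
      ⊆ {g : PathSpace | ∃ t ∈ s, Lf.L g.1 0 T = (t : WithTop ℝ)} := by
    rintro g ⟨t, hts, hL⟩
    have hsh := Lf.shift g.1 g.2.1 g.2.2 (-c) (T - c) (-c) (by linarith)
    rw [show -c - -c = (0:ℝ) by ring, show T - c - -c = T by ring] at hsh
    have hfun : (shiftPath (-c) g).1 = fun x => g.1 (x + -c) := rfl
    rw [← hfun, hL] at hsh
    have hco : ((t + c : ℝ) : WithTop ℝ) + ((-c : ℝ) : WithTop ℝ) = ((t : ℝ) : WithTop ℝ) := by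
      rw [← WithTop.coe_add]
      norm_num
    rw [hco] at hsh
    exact ⟨t, hts, L_zero_of_L_shift hrep hfirst hT0 g hc (hsub hts).1 (hsub hts).2 hsh⟩
  rw [hmap]
  exact measure_mono hpre

include hT1 in
lemma key_Ioc (a b c : ℝ) (ha : 0 ≤ a) (hc : 0 ≤ c) (hbc : b + c ≤ T) :
    lawOn Lf μ T (Set.Ioc (a + c) (b + c)) ≤ lawOn Lf μ T (Set.Ioc a b) := by
  rcases le_or_gt b a with hba | hab
  · rw [Set.Ioc_eq_empty (by intro h; exact absurd h (by linarith))]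
    simp
  have hν : ∀ x y : ℝ, y ≤ T → lawOn Lf μ T (Set.Ioc x y)
      = μ {g : PathSpace | ∃ t ∈ Set.Ioc x y, Lf.L g.1 0 T = (t : WithTop ℝ)} := by
    intro x y hy
    rw [lawOn, Measure.map_apply (measurable_embedTopL Lf hT0) measurableSet_Ioc]
    congr 1
    ext g
    simp only [Set.mem_preimage, Set.mem_setOf_eq]
    cases hL : Lf.L g.1 0 T with
    | top =>
      simp only [embedTop, hL, WithTop.untopD_top, inftyPoint]
      constructor
      · rintro ⟨_, h2⟩; linarith
      · rintro ⟨t, _, ht⟩; exact absurd ht (by simp)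
    | coe t =>
      simp only [embedTop, hL, WithTop.untopD_coe]
      constructor
      · intro ht; exact ⟨t, ht, rfl⟩
      · rintro ⟨u, hu, huh⟩
        obtain rfl : t = u := by exact_mod_cast huh
        exact hu
  rw [hν _ _ hbc, hν _ _ (by linarith)]
  have hset : {g : PathSpace | ∃ t ∈ Set.Ioc (a + c) (b + c), Lf.L g.1 0 T = (t : WithTop ℝ)}
      = {g : PathSpace | ∃ t ∈ Set.Ioc a b, Lf.L g.1 0 T = ((t + c : ℝ) : WithTop ℝ)} := by
    ext g
    constructor
    · rintro ⟨t, ht, hL⟩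
      refine ⟨t - c, ⟨by linarith [ht.1], by linarith [ht.2]⟩, ?_⟩
      rw [sub_add_cancel]; exact hL
    · rintro ⟨t, ht, hL⟩
      exact ⟨t + c, ⟨by linarith [ht.1], by linarith [ht.2]⟩, hL⟩
  rw [hset]
  exact key_shift_le hstat hrep hfirst hT0 c hc (Set.Ioc a b) measurableSet_Ioc
    (fun t ht => ⟨le_of_lt (lt_of_le_of_lt ha ht.1), by linarith [ht.2]⟩)

end Key



section Slope

set_option maxHeartbeats 1000000 in
/-- From translation monotonicity of `Ioc`-measures, the average density on an interval
dominates the average density on an adjacent interval to its right. -/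
lemma slope_ineq (T : ℝ) (ν : Measure ℝ) [IsFiniteMeasure ν]
    (key : ∀ a b c : ℝ, 0 ≤ a → 0 ≤ c → b + c ≤ T →
      ν (Set.Ioc (a + c) (b + c)) ≤ ν (Set.Ioc a b))
    {x y z : ℝ} (hx : 0 ≤ x) (hxy : x < y) (hyz : y < z) (hzT : z ≤ T) :
    (y - x) * (ν (Set.Ioc y z)).toReal ≤ (z - y) * (ν (Set.Ioc x y)).toReal := by
  set r : ℝ := (y - x) / (z - y) with hrdef
  have hzy : (0:ℝ) < z - y := by linarith
  have hyx : (0:ℝ) < y - x := by linarith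
  have hr : 0 ≤ r := le_of_lt (div_pos hyx hzy)
  set A : ℝ := (ν (Set.Ioc y z)).toReal with hAdef
  set B : ℝ := (ν (Set.Ioc x y)).toReal with hBdef
  have hA0 : 0 ≤ A := ENNReal.toReal_nonneg
  -- main discrete inequality
  have main : ∀ k : ℕ, 1 ≤ k → (z - y) / k ≤ y - x →
      ((⌊r * k⌋₊ : ℝ≥0∞)) * ν (Set.Ioc y z) ≤ (k : ℝ≥0∞) * ν (Set.Ioc x y) := by
    intro k hk1 hδyx'
    set δ : ℝ := (z - y) / k with hδdef
    have hkpos : (0:ℝ) < k := by exact_mod_cast hk1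
    have hδpos : 0 < δ := div_pos hzy hkpos
    have hδyx : δ ≤ y - x := hδyx'
    have hkδ : (k : ℝ) * δ = z - y := by rw [hδdef]; field_simp
    set m : ℝ≥0∞ := ν (Set.Ioc (y - δ) y) with hmdef
    have hyδ0 : 0 ≤ y - δ := by linarith
    have hyT : y ≤ T := by linarith
    -- claim 1 : ν (Ioc y (y + j δ)) ≤ j m
    have claim1 : ∀ j : ℕ, j ≤ k → ν (Set.Ioc y (y + j * δ)) ≤ (j : ℝ≥0∞) * m := by
      intro j
      induction j with
      | zero => intro _; norm_num
      | succ j ih =>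
        intro hjk
        have hcast : ((j+1 : ℕ) : ℝ) = (j:ℝ)+1 := by push_cast; ring
        have hcast2 : ((j+1 : ℕ) : ℝ≥0∞) = (j:ℝ≥0∞)+1 := by push_cast; ring
        rw [hcast, hcast2]
        have ihj := ih (le_trans (Nat.le_succ j) hjk)
        have hjk1 : ((j:ℝ) + 1) ≤ (k:ℝ) := by exact_mod_cast hjk
        have hj0 : (0:ℝ) ≤ (j:ℝ) := Nat.cast_nonneg j
        have hmul : ((j:ℝ)+1) * δ ≤ (k:ℝ) * δ := mul_le_mul_of_nonneg_right hjk1 hδpos.le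
        have hbT : y + ((j:ℝ)+1) * δ ≤ T := by
          rw [hkδ] at hmul; linarith
        have hpiece := key (y - δ) y (((j:ℝ)+1) * δ) hyδ0 (by positivity) (by linarith)
        rw [show y - δ + ((j:ℝ)+1)*δ = y + (j:ℝ)*δ by ring] at hpiece
        have h1 : y ≤ y + (j:ℝ) * δ := by nlinarith
        have h2 : y + (j:ℝ) * δ ≤ y + ((j:ℝ)+1) * δ := by nlinarith
        have hunion : Set.Ioc y (y + ((j:ℝ)+1)*δ)
            = Set.Ioc y (y + (j:ℝ)*δ) ∪ Set.Ioc (y + (j:ℝ)*δ) (y + ((j:ℝ)+1)*δ) :=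
          (Set.Ioc_union_Ioc_eq_Ioc h1 h2).symm
        rw [hunion, add_mul (j : ℝ≥0∞) 1 m, one_mul]
        exact le_trans (measure_union_le _ _) (add_le_add ihj hpiece)
    -- claim 2 : j m ≤ ν (Ioc (y - j δ) y)
    have claim2 : ∀ j : ℕ, (j:ℝ) * δ ≤ y - x →
        (j : ℝ≥0∞) * m ≤ ν (Set.Ioc (y - j * δ) y) := by
      intro j
      induction j with
      | zero => intro _; norm_num
      | succ j ih =>
        intro hj1
        have hcast : ((j+1 : ℕ) : ℝ) = (j:ℝ)+1 := by push_cast; ring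
        have hcast2 : ((j+1 : ℕ) : ℝ≥0∞) = (j:ℝ≥0∞)+1 := by push_cast; ring
        rw [hcast] at hj1
        rw [hcast, hcast2]
        have hj0 : (0:ℝ) ≤ (j:ℝ) := Nat.cast_nonneg j
        have hjδ : (j:ℝ) * δ ≤ y - x := by nlinarith
        have ihj := ih hjδ
        have ha0 : 0 ≤ y - ((j:ℝ)+1) * δ := by nlinarith
        have hpiece := key (y - ((j:ℝ)+1)*δ) (y - (j:ℝ)*δ) ((j:ℝ)*δ)
          ha0 (by positivity) (by nlinarith)
        rw [show y - ((j:ℝ)+1)*δ + (j:ℝ)*δ = y - δ by ring,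
          show y - (j:ℝ)*δ + (j:ℝ)*δ = y by ring] at hpiece
        have h1 : y - ((j:ℝ)+1) * δ ≤ y - (j:ℝ) * δ := by nlinarith
        have h2 : y - (j:ℝ) * δ ≤ y := by nlinarith
        have hunion : Set.Ioc (y - ((j:ℝ)+1)*δ) y
            = Set.Ioc (y - ((j:ℝ)+1)*δ) (y - (j:ℝ)*δ) ∪ Set.Ioc (y - (j:ℝ)*δ) y :=
          (Set.Ioc_union_Ioc_eq_Ioc h1 h2).symm
        rw [hunion, measure_union (Set.Ioc_disjoint_Ioc_of_le le_rfl) measurableSet_Ioc,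
          add_mul (j : ℝ≥0∞) 1 m, one_mul, add_comm ((j:ℝ≥0∞) * m) m]
        exact add_le_add hpiece ihj
    set n : ℕ := ⌊r * k⌋₊ with hndef
    have hnr : (n:ℝ) ≤ r * k := Nat.floor_le (by positivity)
    have hrkδ : r * (k:ℝ) * δ = y - x := by
      rw [mul_assoc, hkδ, hrdef, div_mul_cancel₀ _ hzy.ne']
    have hnδ : (n:ℝ) * δ ≤ y - x := by
      calc (n:ℝ) * δ ≤ r * k * δ := mul_le_mul_of_nonneg_right hnr hδpos.le
      _ = y - x := hrkδ
    have hclaim1 := claim1 k le_rfl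
    rw [hkδ, show y + (z - y) = z by ring] at hclaim1
    have hclaim2 := claim2 n hnδ
    have hsub : Set.Ioc (y - n * δ) y ⊆ Set.Ioc x y :=
      Set.Ioc_subset_Ioc_left (by linarith)
    calc (n : ℝ≥0∞) * ν (Set.Ioc y z) ≤ (n : ℝ≥0∞) * ((k:ℝ≥0∞) * m) :=
          mul_le_mul_right hclaim1 _
      _ = (k:ℝ≥0∞) * ((n:ℝ≥0∞) * m) := by ring
      _ ≤ (k:ℝ≥0∞) * ν (Set.Ioc (y - n * δ) y) := mul_le_mul_right hclaim2 _
      _ ≤ (k:ℝ≥0∞) * ν (Set.Ioc x y) := mul_le_mul_right (measure_mono hsub) _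
  -- convert to reals and take limits
  have hreal : ∀ᶠ k : ℕ in atTop, ((⌊r * (k:ℝ)⌋₊ : ℝ) / (k:ℝ)) * A ≤ B := by
    have hev : ∀ᶠ k : ℕ in atTop, 1 ≤ k ∧ (z - y) / (k:ℝ) ≤ y - x := by
      filter_upwards [eventually_ge_atTop (max 1 ⌈(z - y)/(y - x)⌉₊)] with k hk
      have hk1 : 1 ≤ k := le_trans (le_max_left _ _) hk
      have hkc : ⌈(z - y)/(y - x)⌉₊ ≤ k := le_trans (le_max_right _ _) hk
      have hkpos : (0:ℝ) < k := by exact_mod_cast hk1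
      refine ⟨hk1, ?_⟩
      rw [div_le_iff₀ hkpos]
      have : (z - y)/(y - x) ≤ (k:ℝ) := le_trans (Nat.le_ceil _) (by exact_mod_cast hkc)
      rw [div_le_iff₀ hyx] at this
      linarith
    filter_upwards [hev] with k hk
    obtain ⟨hk1, hδyx⟩ := hk
    have hkpos : (0:ℝ) < k := by exact_mod_cast hk1
    have h := main k hk1 hδyx
    have hfin : ((k : ℝ≥0∞) * ν (Set.Ioc x y)) ≠ ⊤ :=
      ENNReal.mul_ne_top (ENNReal.natCast_ne_top k) (measure_ne_top ν _)
    have h' := ENNReal.toReal_mono hfin h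
    rw [ENNReal.toReal_mul, ENNReal.toReal_mul, ENNReal.toReal_natCast,
      ENNReal.toReal_natCast] at h'
    rw [div_mul_eq_mul_div, div_le_iff₀ hkpos]
    calc (⌊r * (k:ℝ)⌋₊ : ℝ) * A ≤ (k:ℝ) * B := h'
      _ = B * k := by ring
  have hlim : Tendsto (fun k : ℕ => ((⌊r * (k:ℝ)⌋₊ : ℝ) / (k:ℝ)) * A) atTop (𝓝 (r * A)) :=
    ((tendsto_nat_floor_mul_div_atTop hr).comp tendsto_natCast_atTop_atTop).mul_const A
  have hfinal : r * A ≤ B := le_of_tendsto hlim hreal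
  rw [hrdef, div_mul_eq_mul_div, div_le_iff₀ hzy] at hfinal
  linarith

end Slope


section Density

set_option maxHeartbeats 1000000 in
/-- A finite measure on `ℝ` whose `Ioc`-measures decrease under right translations inside
`[0,T]` has a non-increasing density on `(0,T)`. -/
lemma density_of_key (T : ℝ) (hT0 : 0 < T) (ν : Measure ℝ) [IsFiniteMeasure ν]
    (key : ∀ a b c : ℝ, 0 ≤ a → 0 ≤ c → b + c ≤ T →
      ν (Set.Ioc (a + c) (b + c)) ≤ ν (Set.Ioc a b)) :
    ∃ f : ℝ → ℝ, AntitoneOn f (Set.Ioo 0 T) ∧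
      ∀ s : Set ℝ, MeasurableSet s → s ⊆ Set.Ioo 0 T →
        ν s = ∫⁻ t in s, ENNReal.ofReal (f t) := by
  classical
  set F : ℝ → ℝ := fun t => (ν (Set.Ioc 0 t)).toReal with hFdef
  have hFmono : Monotone F := fun s t hst =>
    ENNReal.toReal_mono (measure_ne_top ν _) (measure_mono (Set.Ioc_subset_Ioc_right hst))
  have hFdiff : ∀ x y : ℝ, 0 ≤ x → x ≤ y → F y - F x = (ν (Set.Ioc x y)).toReal := by
    intro x y hx hxy
    have hsplit : ν (Set.Ioc 0 y) = ν (Set.Ioc 0 x) + ν (Set.Ioc x y) := by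
      rw [← Set.Ioc_union_Ioc_eq_Ioc hx hxy,
        measure_union (Set.Ioc_disjoint_Ioc_of_le le_rfl) measurableSet_Ioc]
    simp only [hFdef]
    rw [hsplit, ENNReal.toReal_add (measure_ne_top ν _) (measure_ne_top ν _)]
    ring
  -- concavity of F on [0,T]
  have hconc : ConcaveOn ℝ (Set.Icc 0 T) F := by
    apply concaveOn_of_slope_anti_adjacent (convex_Icc 0 T)
    intro x y z hx hz hxy hyz
    have h := slope_ineq T ν key hx.1 hxy hyz hz.2
    rw [div_le_div_iff₀ (by linarith) (by linarith)]
    rw [hFdiff y z (by linarith [hx.1]) hyz.le, hFdiff x y hx.1 hxy.le]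
    nlinarith
  have hconv : ConvexOn ℝ (Set.Icc 0 T) (-F) := hconc.neg
  -- slope function and its monotonicity
  set sl : ℝ → ℝ → ℝ := fun t y => (F y - F t) / (y - t) with hsldef
  have hsl_anti : ∀ t ∈ Set.Ioo 0 T, ∀ y₁ ∈ Set.Ioo t T, ∀ y₂ ∈ Set.Ioo t T,
      y₁ ≤ y₂ → sl t y₂ ≤ sl t y₁ := by
    intro t ht y₁ hy₁ y₂ hy₂ h12
    have ht' : t ∈ Set.Icc (0:ℝ) T := ⟨ht.1.le, ht.2.le⟩
    have hy₁' : y₁ ∈ Set.Icc (0:ℝ) T := ⟨by linarith [ht.1, hy₁.1], hy₁.2.le⟩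
    have hy₂' : y₂ ∈ Set.Icc (0:ℝ) T := ⟨by linarith [ht.1, hy₂.1], hy₂.2.le⟩
    have h := hconv.secant_mono ht' hy₁' hy₂' (ne_of_gt hy₁.1) (ne_of_gt hy₂.1) h12
    simp only [Pi.neg_apply] at h
    have e1 : -F y₁ - -F t = -(F y₁ - F t) := by ring
    have e2 : -F y₂ - -F t = -(F y₂ - F t) := by ring
    rw [e1, e2, neg_div, neg_div, neg_le_neg_iff] at h
    exact h
  -- the density: right derivative of F
  set f : ℝ → ℝ := fun t => sSup (sl t '' Set.Ioo t T) with hfd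
  have hne : ∀ t ∈ Set.Ioo 0 T, (sl t '' Set.Ioo t T).Nonempty :=
    fun t ht => (Set.nonempty_Ioo.2 ht.2).image _
  have hbdd : ∀ t ∈ Set.Ioo 0 T, BddAbove (sl t '' Set.Ioo t T) := by
    intro t ht
    refine ⟨sl (t/2) t, ?_⟩
    rintro v ⟨y, hy, rfl⟩
    have h := hconc.slope_anti_adjacent (x := t/2) (y := t) (z := y)
      ⟨by linarith [ht.1], by linarith [ht.2]⟩ ⟨by linarith [ht.1, hy.1], hy.2.le⟩
      (by linarith [ht.1]) hy.1
    exact h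
  have hf_nonneg : ∀ t ∈ Set.Ioo 0 T, 0 ≤ f t := by
    intro t ht
    have hy : (t + T)/2 ∈ Set.Ioo t T := ⟨by linarith [ht.2], by linarith [ht.2]⟩
    have h0 : 0 ≤ sl t ((t + T)/2) :=
      div_nonneg (sub_nonneg.2 (hFmono (by linarith [ht.2]))) (by linarith [ht.2])
    exact le_trans h0 (le_csSup (hbdd t ht) ⟨_, hy, rfl⟩)
  -- f is antitone
  have hanti : AntitoneOn f (Set.Ioo 0 T) := by
    intro t ht t' ht' htt'
    rcases eq_or_lt_of_le htt' with rfl | hlt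
    · exact le_refl _
    have h1 : f t' ≤ sl t t' := by
      apply csSup_le (hne t' ht')
      rintro v ⟨y, hy, rfl⟩
      exact hconc.slope_anti_adjacent ⟨ht.1.le, ht.2.le⟩
        ⟨by linarith [ht.1, hy.1], hy.2.le⟩ hlt hy.1
    have h2 : sl t t' ≤ f t := le_csSup (hbdd t ht) ⟨t', ⟨hlt, ht'.2⟩, rfl⟩
    exact h1.trans h2
  -- F has right derivative f
  have hderiv : ∀ t ∈ Set.Ioo 0 T, HasDerivWithinAt F (f t) (Set.Ioi t) t := by
    intro t ht
    have hts : t ∉ Set.Ioi t := fun h => lt_irrefl t h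
    rw [hasDerivWithinAt_iff_tendsto_slope' hts]
    have heq : slope F t = sl t := funext fun y => slope_def_field F t y
    rw [heq]
    exact AntitoneOn.tendsto_nhdsWithin_Ioo_right (Set.nonempty_Ioo.2 ht.2)
      (fun y₁ hy₁ y₂ hy₂ h12 => hsl_anti t ht y₁ hy₁ y₂ hy₂ h12) (hbdd t ht)
  have hcontF : ContinuousOn F (Set.Ioo 0 T) := by
    have := hconc.continuousOn_interior
    rwa [interior_Icc] at this
  -- the FTC identity on closed subintervals
  have hIoc : ∀ a b : ℝ, 0 < a → a ≤ b → b < T →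
      ν (Set.Ioc a b) = ∫⁻ t in Set.Ioc a b, ENNReal.ofReal (f t) := by
    intro a b ha hab hbT
    have hsubIcc : Set.Icc a b ⊆ Set.Ioo 0 T :=
      fun u hu => ⟨lt_of_lt_of_le ha hu.1, lt_of_le_of_lt hu.2 hbT⟩
    have hcont : ContinuousOn F (Set.Icc a b) := hcontF.mono hsubIcc
    have hint : IntervalIntegrable f volume a b :=
      (hanti.mono (by rw [Set.uIcc_of_le hab]; exact hsubIcc)).intervalIntegrable
    have hderiv' : ∀ x ∈ Set.Ioo a b, HasDerivWithinAt F (f x) (Set.Ioi x) x :=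
      fun x hx => hderiv x ⟨lt_trans ha hx.1, lt_trans hx.2 hbT⟩
    have hFTC := intervalIntegral.integral_eq_sub_of_hasDeriv_right_of_le hab hcont hderiv' hint
    have hInt : IntegrableOn f (Set.Ioc a b) volume :=
      (intervalIntegrable_iff_integrableOn_Ioc_of_le hab).1 hint
    have hae : 0 ≤ᵐ[volume.restrict (Set.Ioc a b)] f :=
      (ae_restrict_iff' measurableSet_Ioc).2 (ae_of_all _ fun x hx =>
        hf_nonneg x ⟨lt_trans ha hx.1, lt_of_le_of_lt hx.2 hbT⟩)
    have h1 : ∫⁻ t in Set.Ioc a b, ENNReal.ofReal (f t)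
        = ENNReal.ofReal (∫ t in Set.Ioc a b, f t) :=
      (ofReal_integral_eq_lintegral_ofReal hInt hae).symm
    have h2 : ∫ t in Set.Ioc a b, f t = F b - F a := by
      rw [← intervalIntegral.integral_of_le hab]; exact hFTC
    rw [h1, h2, hFdiff a b (le_of_lt ha) hab, ENNReal.ofReal_toReal (measure_ne_top ν _)]
  -- the density measure
  set wd := volume.withDensity (fun t => ENNReal.ofReal (f t)) with hwd
  have hwdI : ∀ s : Set ℝ, MeasurableSet s → wd s = ∫⁻ t in s, ENNReal.ofReal (f t) :=
    fun s hs => withDensity_apply _ hs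
  -- agreement on measurable subsets of Ioc a b
  have hseteq : ∀ a b : ℝ, 0 < a → b < T → ∀ u : Set ℝ, MeasurableSet u →
      u ⊆ Set.Ioc a b → ν u = wd u := by
    intro a b ha hbT u hu hsub
    rcases le_or_gt a b with hab | hba
    swap
    · have hu0 : u = ∅ := by
        rw [Set.Ioc_eq_empty (not_lt.2 hba.le)] at hsub
        exact Set.eq_empty_of_subset_empty hsub
      simp [hu0]
    have hrest : ν.restrict (Set.Ioc a b) = wd.restrict (Set.Ioc a b) := by
      refine Measure.ext_of_Ioc _ _ (fun x y hxy => ?_)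
      rw [Measure.restrict_apply measurableSet_Ioc, Measure.restrict_apply measurableSet_Ioc,
        Set.Ioc_inter_Ioc]
      rcases lt_or_ge (max x a) (min y b) with hxy' | hyx'
      · rw [hIoc (max x a) (min y b) (lt_of_lt_of_le ha (le_max_right x a)) hxy'.le
          (lt_of_le_of_lt (min_le_right y b) hbT), hwdI _ measurableSet_Ioc]
      · rw [Set.Ioc_eq_empty (not_lt.2 hyx')]; simp
    calc ν u = ν.restrict (Set.Ioc a b) u := by
          rw [Measure.restrict_apply hu, Set.inter_eq_self_of_subset_left hsub]
      _ = wd.restrict (Set.Ioc a b) u := by rw [hrest]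
      _ = wd u := by
          rw [Measure.restrict_apply hu, Set.inter_eq_self_of_subset_left hsub]
  refine ⟨f, hanti, ?_⟩
  intro s hs hssub
  set I : ℕ → Set ℝ := fun n => Set.Ioc (T/(n+3)) (T - T/(n+3)) with hI
  have hImono : Monotone fun n => s ∩ I n := by
    intro n m hnm
    apply Set.inter_subset_inter_right
    have hc : ((n:ℝ)+3) ≤ ((m:ℝ)+3) := by
      have : (n:ℝ) ≤ m := by exact_mod_cast hnm
      linarith
    have hdiv : T/((m:ℝ)+3) ≤ T/((n:ℝ)+3) := by gcongr
    exact Set.Ioc_subset_Ioc hdiv (by linarith)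
  have hcover : ⋃ n, (s ∩ I n) = s := by
    apply Set.Subset.antisymm
    · exact Set.iUnion_subset fun n => Set.inter_subset_left
    · intro u hu
      have hu' := hssub hu
      have hmin : 0 < min u (T - u) := lt_min hu'.1 (by linarith [hu'.2])
      obtain ⟨n, hn⟩ := exists_nat_gt (T / min u (T - u))
      refine Set.mem_iUnion.2 ⟨n, hu, ?_⟩
      have hTn : T/((n:ℝ)+3) < min u (T - u) := by
        rw [div_lt_iff₀ (by positivity)]
        rw [div_lt_iff₀ hmin] at hn
        nlinarith [hmin]
      constructor
      · exact lt_of_lt_of_le hTn (min_le_left _ _)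
      · have := lt_of_lt_of_le hTn (min_le_right _ _); linarith
  have hν : ν s = ⨆ n, ν (s ∩ I n) := by
    conv_lhs => rw [← hcover]
    exact hImono.directed_le.measure_iUnion
  have hwds : wd s = ⨆ n, wd (s ∩ I n) := by
    conv_lhs => rw [← hcover]
    exact hImono.directed_le.measure_iUnion
  have hterm : ∀ n : ℕ, ν (s ∩ I n) = wd (s ∩ I n) := by
    intro n
    exact hseteq (T/((n:ℝ)+3)) (T - T/((n:ℝ)+3)) (by positivity)
      (by have : 0 < T/((n:ℝ)+3) := by positivity
          linarith)
      (s ∩ I n) (hs.inter measurableSet_Ioc) Set.inter_subset_right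
  have hfin : ν s = wd s := by
    rw [hν, hwds]
    exact iSup_congr hterm
  rw [hfin]
  exact hwdI s hs

end Density

/-- For a first-time intrinsic location functional and a
periodic stationary process with period 1, the law of `L(X,[0,T])` restricted
to `(0,T)` is absolutely continuous with a non-increasing density. -/
theorem stmt13 (μ : Measure PathSpace) [IsProbabilityMeasure μ]
    (hstat : IsStationaryProc μ) (Lf : ILF) (hft : Lf.FirstTime)
    (T : ℝ) (hT0 : 0 < T) (hT1 : T ≤ 1) :
    ∃ f : ℝ → ℝ, AntitoneOn f (Set.Ioo 0 T) ∧
      ∀ s : Set ℝ, MeasurableSet s → s ⊆ Set.Ioo 0 T →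
        lawOn Lf μ T s = ∫⁻ t in s, ENNReal.ofReal (f t) := by
  obtain ⟨R, hrep, hfirst⟩ := hft
  haveI : IsProbabilityMeasure (lawOn Lf μ T) := by
    rw [lawOn]
    exact Measure.isProbabilityMeasure_map (measurable_embedTopL Lf hT0).aemeasurable
  exact density_of_key T hT0 (lawOn Lf μ T)
    (fun a b c ha hc hbc => key_Ioc hstat hrep hfirst hT0 hT1 a b c ha hc hbc)

end
end
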